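/- Let δ : D → C be an injective coalgebra homomorphism of coalgebras over a field K. If the union of the iterated wedge powers satisfies ⋃_{n≥1} D^{∧_C^n} = C, then the coradical of C is contained in the image of δ: Corad(C) ⊆ Im(δ). -/

import Mathlib

open TensorProduct CategoryTheory

universe u

noncomputable section

variable (K : Type u) [Field K]

/-- `tpow C n = C^{⊗(n+1)}`. -/
def tpow (C : ModuleCat.{u} K) : ℕ → ModuleCat.{u} K
  | 0 => C
  | n + 1 => ModuleCat.of K (tpow C n ⊗[K] C)

/-- `tpowMap f n = f^{⊗(n+1)}`. -/
def tpowMap {C D : ModuleCat.{u} K} (f : C ⟶ D) : ∀ n : ℕ, tpow K C n ⟶ tpow K D n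
  | 0 => f
  | n + 1 => ModuleCat.ofHom (TensorProduct.map (tpowMap f n).hom f.hom)

variable (C : Type u) [AddCommGroup C] [Module K C] [Coalgebra K C]

/-- The `n`-th iterated comultiplication `Δ^n : C ⟶ C^{⊗(n+1)}`. -/
def itComul : ∀ n : ℕ, ModuleCat.of K C ⟶ tpow K (ModuleCat.of K C) n
  | 0 => 𝟙 (ModuleCat.of K C)
  | n + 1 =>
      ModuleCat.ofHom (TensorProduct.map (itComul n).hom (LinearMap.id) ∘ₗ
        (Coalgebra.comul (R := K) (A := C)))

variable {C} in
/-- Given an injective coalgebra map with image `D`, the wedge power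
`D^{∧_C^{n+1}} = Ker(p^{⊗(n+1)} ∘ Δ_C^n)`, where `p : C → C/D` is the quotient map. -/
def wedgePow {D : Type u} [AddCommGroup D] [Module K D] [Coalgebra K D]
    (δ : D →ₗc[K] C) (n : ℕ) : Submodule K C :=
  LinearMap.ker
    ((itComul K C n ≫
        tpowMap K (ModuleCat.ofHom (LinearMap.range δ.toLinearMap).mkQ :
          ModuleCat.of K C ⟶ ModuleCat.of K (C ⧸ LinearMap.range δ.toLinearMap)) n :
      ModuleCat.of K C ⟶ _).hom :
      C →ₗ[K] tpow K (ModuleCat.of K (C ⧸ LinearMap.range δ.toLinearMap)) n)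

/-- A subspace `V` of a coalgebra is a subcoalgebra if `Δ(V) ⊆ V ⊗ V` inside `C ⊗ C`. -/
def IsSubcoalgebra (V : Submodule K C) : Prop :=
  ∀ x ∈ V, Coalgebra.comul (R := K) x ∈
    LinearMap.range (TensorProduct.map V.subtype V.subtype)

/-- The coradical of a coalgebra: the sum of all its simple subcoalgebras. -/
def coradical : Submodule K C :=
  sSup {V : Submodule K C | IsSubcoalgebra K C V ∧ V ≠ ⊥ ∧
    ∀ W : Submodule K C, W ≤ V → IsSubcoalgebra K C W → W = ⊥ ∨ W = V}


/-! ### Auxiliary lemmas -/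

section Aux

variable {K}

lemma aux_subtype_bot {M : Type u} [AddCommGroup M] [Module K M] :
    (⊥ : Submodule K M).subtype = 0 := by
  ext ⟨x, hx⟩
  simpa using hx

lemma aux_map_inj {M N M' N' : Type u} [AddCommGroup M] [Module K M] [AddCommGroup N] [Module K N]
    [AddCommGroup M'] [Module K M'] [AddCommGroup N'] [Module K N']
    {f : M →ₗ[K] N} {g : M' →ₗ[K] N'} (hf : Function.Injective f) (hg : Function.Injective g) :
    Function.Injective (TensorProduct.map f g) := by
  rw [← LinearMap.lTensor_comp_rTensor, LinearMap.coe_comp]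
  exact (Module.Flat.lTensor_preserves_injective_linearMap _ hg).comp
    (Module.Flat.rTensor_preserves_injective_linearMap _ hf)

/-- Over a field, the kernel of `A ⊗ B` is `ker A ⊗ N + M ⊗ ker B`. -/
lemma aux_ker_map {M N X Y : Type u} [AddCommGroup M] [Module K M] [AddCommGroup N] [Module K N]
    [AddCommGroup X] [Module K X] [AddCommGroup Y] [Module K Y]
    (A : M →ₗ[K] X) (B : N →ₗ[K] Y) :
    LinearMap.ker (TensorProduct.map A B) =
      LinearMap.range (LinearMap.lTensor M (LinearMap.ker B).subtype) ⊔
        LinearMap.range (LinearMap.rTensor N (LinearMap.ker A).subtype) := by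
  have h1 : TensorProduct.map A B =
      (TensorProduct.map (LinearMap.range A).subtype (LinearMap.range B).subtype).comp
        (TensorProduct.map A.rangeRestrict B.rangeRestrict) := by
    rw [← TensorProduct.map_comp]
    congr 1
  have e1 : Function.Exact (LinearMap.ker A).subtype A.rangeRestrict := by
    rw [← LinearMap.ker_rangeRestrict A]
    exact LinearMap.exact_subtype_ker_map _
  have e2 : Function.Exact (LinearMap.ker B).subtype B.rangeRestrict := by
    rw [← LinearMap.ker_rangeRestrict B]
    exact LinearMap.exact_subtype_ker_map _
  rw [h1, LinearMap.ker_comp,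
    LinearMap.ker_eq_bot.mpr
      (aux_map_inj (Submodule.injective_subtype _) (Submodule.injective_subtype _)),
    Submodule.comap_bot]
  exact TensorProduct.map_ker e1 A.surjective_rangeRestrict e2 B.surjective_rangeRestrict

/-- If `t ∈ Im(f ⊗ g)` with `f, g` injective and `t` is killed by `α ⊗ β` with
`ker α ∩ Im f = 0` and `ker β ∩ Im g = 0`, then `t = 0`. -/
lemma aux_vanish {M N Z₁ Z₂ X Y : Type u}
    [AddCommGroup M] [Module K M] [AddCommGroup N] [Module K N]
    [AddCommGroup Z₁] [Module K Z₁] [AddCommGroup Z₂] [Module K Z₂]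
    [AddCommGroup X] [Module K X] [AddCommGroup Y] [Module K Y]
    (f : M →ₗ[K] Z₁) (g : N →ₗ[K] Z₂) (α : Z₁ →ₗ[K] X) (β : Z₂ →ₗ[K] Y)
    (hf : Function.Injective f) (hg : Function.Injective g)
    (hαf : LinearMap.ker α ⊓ LinearMap.range f = ⊥)
    (hβg : LinearMap.ker β ⊓ LinearMap.range g = ⊥)
    {t : Z₁ ⊗[K] Z₂} (ht : t ∈ LinearMap.range (TensorProduct.map f g))
    (h0 : TensorProduct.map α β t = 0) : t = 0 := by
  obtain ⟨s, rfl⟩ := ht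
  have h1 : TensorProduct.map (α ∘ₗ f) (β ∘ₗ g) s = 0 := by
    rw [TensorProduct.map_comp]; exact h0
  have hker1 : LinearMap.ker (α ∘ₗ f) = ⊥ := by
    rw [Submodule.eq_bot_iff]
    intro m hm
    rw [LinearMap.mem_ker, LinearMap.comp_apply] at hm
    have hm2 : f m ∈ LinearMap.ker α ⊓ LinearMap.range f := ⟨hm, m, rfl⟩
    rw [hαf, Submodule.mem_bot] at hm2
    exact hf (by simpa using hm2)
  have hker2 : LinearMap.ker (β ∘ₗ g) = ⊥ := by
    rw [Submodule.eq_bot_iff]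
    intro m hm
    rw [LinearMap.mem_ker, LinearMap.comp_apply] at hm
    have hm2 : g m ∈ LinearMap.ker β ⊓ LinearMap.range g := ⟨hm, m, rfl⟩
    rw [hβg, Submodule.mem_bot] at hm2
    exact hg (by simpa using hm2)
  have hs : s ∈ LinearMap.ker (TensorProduct.map (α ∘ₗ f) (β ∘ₗ g)) := h1
  rw [aux_ker_map, hker1, hker2] at hs
  simp only [aux_subtype_bot, LinearMap.lTensor_zero, LinearMap.rTensor_zero,
    LinearMap.range_zero, sup_bot_eq, Submodule.mem_bot] at hs
  rw [hs, map_zero]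

/-- If `t ∈ Im(f ⊗ g)` with `f` injective, and `t` is killed by `id ⊗ mkQ B`,
then in fact `t ∈ Im(f ⊗ (B ⊓ Im g).subtype)`. -/
lemma aux_purify_right {M N Z₁ Z₂ : Type u}
    [AddCommGroup M] [Module K M] [AddCommGroup N] [Module K N]
    [AddCommGroup Z₁] [Module K Z₁] [AddCommGroup Z₂] [Module K Z₂]
    (f : M →ₗ[K] Z₁) (g : N →ₗ[K] Z₂) (B : Submodule K Z₂)
    (hf : Function.Injective f)
    {t : Z₁ ⊗[K] Z₂} (ht : t ∈ LinearMap.range (TensorProduct.map f g))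
    (h0 : LinearMap.lTensor Z₁ B.mkQ t = 0) :
    t ∈ LinearMap.range (TensorProduct.map f (B ⊓ LinearMap.range g).subtype) := by
  obtain ⟨s, rfl⟩ := ht
  have h1 : TensorProduct.map (LinearMap.id ∘ₗ f) ((B.mkQ) ∘ₗ g) s = 0 := by
    rw [TensorProduct.map_comp]; exact h0
  have hker1 : LinearMap.ker ((LinearMap.id : Z₁ →ₗ[K] Z₁) ∘ₗ f) = ⊥ := by
    rw [LinearMap.id_comp]; exact LinearMap.ker_eq_bot.mpr hf
  have hs : s ∈ LinearMap.ker (TensorProduct.map (LinearMap.id ∘ₗ f) ((B.mkQ) ∘ₗ g)) := h1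
  rw [aux_ker_map, hker1] at hs
  simp only [aux_subtype_bot, LinearMap.rTensor_zero, LinearMap.range_zero, sup_bot_eq] at hs
  obtain ⟨u, hu⟩ := hs
  have hWmem : ∀ w : LinearMap.ker (B.mkQ ∘ₗ g),
      g ((LinearMap.ker (B.mkQ ∘ₗ g)).subtype w) ∈ B ⊓ LinearMap.range g := by
    intro w
    refine ⟨?_, ⟨(w : N), rfl⟩⟩
    have h := w.2
    simpa only [LinearMap.mem_ker, LinearMap.comp_apply, Submodule.mkQ_apply,
      Submodule.Quotient.mk_eq_zero, Submodule.subtype_apply, SetLike.mem_coe] using h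
  refine ⟨TensorProduct.map LinearMap.id
    (LinearMap.codRestrict _ (g ∘ₗ (LinearMap.ker (B.mkQ ∘ₗ g)).subtype) hWmem) u, ?_⟩
  have h2 : TensorProduct.map f g ∘ₗ
        LinearMap.lTensor M (LinearMap.ker (B.mkQ ∘ₗ g)).subtype
      = TensorProduct.map f (B ⊓ LinearMap.range g).subtype ∘ₗ
        TensorProduct.map LinearMap.id
          (LinearMap.codRestrict _ (g ∘ₗ (LinearMap.ker (B.mkQ ∘ₗ g)).subtype) hWmem) := by
    show TensorProduct.map f g ∘ₗ
        TensorProduct.map LinearMap.id (LinearMap.ker (B.mkQ ∘ₗ g)).subtype = _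
    rw [← TensorProduct.map_comp, ← TensorProduct.map_comp]
    congr 1
  have h3 := LinearMap.congr_fun h2 u
  rw [LinearMap.comp_apply, LinearMap.comp_apply, hu] at h3
  exact h3.symm

/-- Left-hand analogue of `aux_purify_right`. -/
lemma aux_purify_left {M N Z₁ Z₂ : Type u}
    [AddCommGroup M] [Module K M] [AddCommGroup N] [Module K N]
    [AddCommGroup Z₁] [Module K Z₁] [AddCommGroup Z₂] [Module K Z₂]
    (f : M →ₗ[K] Z₁) (g : N →ₗ[K] Z₂) (A : Submodule K Z₁)
    (hg : Function.Injective g)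
    {t : Z₁ ⊗[K] Z₂} (ht : t ∈ LinearMap.range (TensorProduct.map f g))
    (h0 : LinearMap.rTensor Z₂ A.mkQ t = 0) :
    t ∈ LinearMap.range (TensorProduct.map (A ⊓ LinearMap.range f).subtype g) := by
  obtain ⟨s, rfl⟩ := ht
  have h1 : TensorProduct.map ((A.mkQ) ∘ₗ f) (LinearMap.id ∘ₗ g) s = 0 := by
    rw [TensorProduct.map_comp]; exact h0
  have hker2 : LinearMap.ker ((LinearMap.id : Z₂ →ₗ[K] Z₂) ∘ₗ g) = ⊥ := by
    rw [LinearMap.id_comp]; exact LinearMap.ker_eq_bot.mpr hg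
  have hs : s ∈ LinearMap.ker (TensorProduct.map ((A.mkQ) ∘ₗ f) (LinearMap.id ∘ₗ g)) := h1
  rw [aux_ker_map, hker2] at hs
  simp only [aux_subtype_bot, LinearMap.lTensor_zero, LinearMap.range_zero, bot_sup_eq] at hs
  obtain ⟨u, hu⟩ := hs
  have hWmem : ∀ w : LinearMap.ker (A.mkQ ∘ₗ f),
      f ((LinearMap.ker (A.mkQ ∘ₗ f)).subtype w) ∈ A ⊓ LinearMap.range f := by
    intro w
    refine ⟨?_, ⟨(w : M), rfl⟩⟩
    have h := w.2
    simpa only [LinearMap.mem_ker, LinearMap.comp_apply, Submodule.mkQ_apply,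
      Submodule.Quotient.mk_eq_zero, Submodule.subtype_apply, SetLike.mem_coe] using h
  refine ⟨TensorProduct.map
    (LinearMap.codRestrict _ (f ∘ₗ (LinearMap.ker (A.mkQ ∘ₗ f)).subtype) hWmem)
    LinearMap.id u, ?_⟩
  have h2 : TensorProduct.map f g ∘ₗ
        LinearMap.rTensor N (LinearMap.ker (A.mkQ ∘ₗ f)).subtype
      = TensorProduct.map (A ⊓ LinearMap.range f).subtype g ∘ₗ
        TensorProduct.map
          (LinearMap.codRestrict _ (f ∘ₗ (LinearMap.ker (A.mkQ ∘ₗ f)).subtype) hWmem)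
          LinearMap.id := by
    show TensorProduct.map f g ∘ₗ
        TensorProduct.map (LinearMap.ker (A.mkQ ∘ₗ f)).subtype LinearMap.id = _
    rw [← TensorProduct.map_comp, ← TensorProduct.map_comp]
    congr 1
  have h3 := LinearMap.congr_fun h2 u
  rw [LinearMap.comp_apply, LinearMap.comp_apply, hu] at h3
  exact h3.symm

end Aux

section CoalgAux

variable {K C}

lemma aux_comul_eq_zero {x : C} (h : Coalgebra.comul (R := K) x = 0) : x = 0 := by
  have h1 := Coalgebra.rTensor_counit_comul (R := K) x
  rw [h, map_zero] at h1
  have h2 := congrArg (TensorProduct.lid K C) h1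
  simpa using h2.symm

/-- `Pmap D' n` is `p^{⊗(n+1)} ∘ Δ^n` where `p : C → C/D'`. -/
def Pmap (D' : Submodule K C) (n : ℕ) : C →ₗ[K] tpow K (ModuleCat.of K (C ⧸ D')) n :=
  ((itComul K C n ≫
      tpowMap K (ModuleCat.ofHom D'.mkQ : ModuleCat.of K C ⟶ ModuleCat.of K (C ⧸ D')) n :
    ModuleCat.of K C ⟶ _).hom :
    C →ₗ[K] tpow K (ModuleCat.of K (C ⧸ D')) n)

lemma Pmap_zero (D' : Submodule K C) : Pmap D' 0 = D'.mkQ := by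
  show (𝟙 (ModuleCat.of K C) ≫ ModuleCat.ofHom D'.mkQ).hom = D'.mkQ
  simp

lemma Pmap_def (D' : Submodule K C) (n : ℕ) :
    Pmap D' n = ((tpowMap K (ModuleCat.ofHom D'.mkQ : ModuleCat.of K C ⟶ ModuleCat.of K (C ⧸ D')) n).hom
      : ↑(tpow K (ModuleCat.of K C) n) →ₗ[K] ↑(tpow K (ModuleCat.of K (C ⧸ D')) n)) ∘ₗ
      ((itComul K C n).hom : C →ₗ[K] ↑(tpow K (ModuleCat.of K C) n)) := rfl

lemma tpowMap_succ_eq {Cm Dm : ModuleCat.{u} K} (f : Cm ⟶ Dm) (n : ℕ) :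
    tpowMap K f (n+1) = ModuleCat.ofHom (TensorProduct.map (tpowMap K f n).hom f.hom) := rfl

lemma itComul_succ_eq (n : ℕ) :
    itComul K C (n+1) = ModuleCat.ofHom (TensorProduct.map (itComul K C n).hom LinearMap.id ∘ₗ
      (Coalgebra.comul (R := K) (A := C)) : C →ₗ[K] ↑(tpow K (ModuleCat.of K C) (n+1))) := rfl

lemma Pmap_succ (D' : Submodule K C) (n : ℕ) :
    Pmap D' (n + 1) =
      (TensorProduct.map (Pmap D' n) D'.mkQ) ∘ₗ (Coalgebra.comul (R := K) (A := C)) := by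
  rw [Pmap_def, Pmap_def, tpowMap_succ_eq, itComul_succ_eq]
  simp only [ModuleCat.hom_ofHom]
  erw [← LinearMap.comp_assoc, ← TensorProduct.map_comp, LinearMap.comp_id]
  rfl

lemma wedgePow_eq_ker {D : Type u} [AddCommGroup D] [Module K D] [Coalgebra K D]
    (δ : D →ₗc[K] C) (n : ℕ) :
    wedgePow K δ n = LinearMap.ker (Pmap (LinearMap.range δ.toLinearMap) n) := rfl

end CoalgAux

/-- Let `δ : D → C` be an injective coalgebra homomorphism of coalgebras
over a field `K`.  If the iterated wedge powers `D^{∧_C^n}` exhaust `C`, then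
`Corad(C) ⊆ Im(δ)`. -/
theorem stmt13 {D : Type u} [AddCommGroup D] [Module K D] [Coalgebra K D]
    (δ : D →ₗc[K] C) (hinj : Function.Injective δ)
    (hexh : ∀ c : C, ∃ n : ℕ, c ∈ wedgePow K δ n) :
    coradical K C ≤ LinearMap.range δ.toLinearMap := by
  apply sSup_le
  rintro V ⟨hVco, hVne, hVsim⟩
  by_contra hnle
  -- the image of `δ` is a subcoalgebra
  have hDco : ∀ x ∈ LinearMap.range δ.toLinearMap, Coalgebra.comul (R := K) x ∈
      LinearMap.range (TensorProduct.map (LinearMap.range δ.toLinearMap).subtype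
        (LinearMap.range δ.toLinearMap).subtype) := by
    rintro x ⟨d, rfl⟩
    refine ⟨TensorProduct.map δ.toLinearMap.rangeRestrict δ.toLinearMap.rangeRestrict
      (Coalgebra.comul (R := K) d), ?_⟩
    have hst : (LinearMap.range δ.toLinearMap).subtype ∘ₗ δ.toLinearMap.rangeRestrict
        = δ.toLinearMap := by
      ext y; rfl
    rw [← LinearMap.comp_apply, ← TensorProduct.map_comp, hst]
    exact CoalgHomClass.map_comp_comul_apply δ d
  have hmkQsub : (LinearMap.range δ.toLinearMap).mkQ ∘ₗ
      (LinearMap.range δ.toLinearMap).subtype = 0 := by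
    ext y
    simp only [LinearMap.comp_apply, LinearMap.zero_apply, Submodule.mkQ_apply]
    exact (Submodule.Quotient.mk_eq_zero _).mpr y.2
  have hDr : ∀ x ∈ LinearMap.range δ.toLinearMap,
      LinearMap.rTensor C (LinearMap.range δ.toLinearMap).mkQ
        (Coalgebra.comul (R := K) x) = 0 := by
    intro x hx
    obtain ⟨s, hs⟩ := hDco x hx
    rw [← hs]
    have hcomp : LinearMap.rTensor C (LinearMap.range δ.toLinearMap).mkQ ∘ₗ
        TensorProduct.map (LinearMap.range δ.toLinearMap).subtype
          (LinearMap.range δ.toLinearMap).subtype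
        = TensorProduct.map
            ((LinearMap.range δ.toLinearMap).mkQ ∘ₗ (LinearMap.range δ.toLinearMap).subtype)
            (LinearMap.id ∘ₗ (LinearMap.range δ.toLinearMap).subtype) := by
      rw [TensorProduct.map_comp]; rfl
    rw [← LinearMap.comp_apply, hcomp, hmkQsub, TensorProduct.map_zero_left,
      LinearMap.zero_apply]
  have hDl : ∀ x ∈ LinearMap.range δ.toLinearMap,
      LinearMap.lTensor C (LinearMap.range δ.toLinearMap).mkQ
        (Coalgebra.comul (R := K) x) = 0 := by
    intro x hx
    obtain ⟨s, hs⟩ := hDco x hx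
    rw [← hs]
    have hcomp : LinearMap.lTensor C (LinearMap.range δ.toLinearMap).mkQ ∘ₗ
        TensorProduct.map (LinearMap.range δ.toLinearMap).subtype
          (LinearMap.range δ.toLinearMap).subtype
        = TensorProduct.map
            (LinearMap.id ∘ₗ (LinearMap.range δ.toLinearMap).subtype)
            ((LinearMap.range δ.toLinearMap).mkQ ∘ₗ
              (LinearMap.range δ.toLinearMap).subtype) := by
      rw [TensorProduct.map_comp]; rfl
    rw [← LinearMap.comp_apply, hcomp, hmkQsub, TensorProduct.map_zero_right,
      LinearMap.zero_apply]
  -- the intersection `V ⊓ Im δ` is a subcoalgebra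
  have hVDco : IsSubcoalgebra K C (V ⊓ LinearMap.range δ.toLinearMap) := by
    intro x hx
    have ht : Coalgebra.comul (R := K) x ∈
        LinearMap.range (TensorProduct.map V.subtype V.subtype) := hVco x hx.1
    have h0r := hDr x hx.2
    have h0l := hDl x hx.2
    have step1 := aux_purify_left V.subtype V.subtype (LinearMap.range δ.toLinearMap)
      (Submodule.injective_subtype V) ht h0r
    rw [Submodule.range_subtype] at step1
    have step2 := aux_purify_right (LinearMap.range δ.toLinearMap ⊓ V).subtype V.subtype
      (LinearMap.range δ.toLinearMap) (Submodule.injective_subtype _) step1 h0l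
    rw [Submodule.range_subtype] at step2
    rw [inf_comm V (LinearMap.range δ.toLinearMap)]
    exact step2
  rcases hVsim (V ⊓ LinearMap.range δ.toLinearMap) inf_le_left hVDco with hbot | heq
  · -- `V ⊓ Im δ = ⊥`: then `V` meets every wedge power trivially, contradicting `V ≠ ⊥`
    have hzero : ∀ n, V ⊓ wedgePow K δ n = ⊥ := by
      intro n
      induction n with
      | zero =>
        rw [wedgePow_eq_ker, Pmap_zero]
        erw [Submodule.ker_mkQ]
        exact hbot
      | succ n ih =>
        rw [Submodule.eq_bot_iff]
        intro x hx
        obtain ⟨hxV, hxW⟩ := Submodule.mem_inf.mp hx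
        rw [wedgePow_eq_ker, LinearMap.mem_ker, Pmap_succ] at hxW
        have ht := hVco x hxV
        have hzero' : Coalgebra.comul (R := K) x = 0 := by
          refine aux_vanish V.subtype V.subtype
            (Pmap (LinearMap.range δ.toLinearMap) n) (LinearMap.range δ.toLinearMap).mkQ
            (Submodule.injective_subtype V) (Submodule.injective_subtype V) ?_ ?_ ht hxW
          · rw [Submodule.range_subtype, ← wedgePow_eq_ker, inf_comm]
            exact ih
          · rw [Submodule.range_subtype, Submodule.ker_mkQ, inf_comm]
            exact hbot
        exact aux_comul_eq_zero hzero'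
    obtain ⟨v, hvV, hv0⟩ := (Submodule.ne_bot_iff V).mp hVne
    obtain ⟨n, hn⟩ := hexh v
    have hmem : v ∈ V ⊓ wedgePow K δ n := Submodule.mem_inf.mpr ⟨hvV, hn⟩
    rw [hzero n, Submodule.mem_bot] at hmem
    exact hv0 hmem
  · -- `V ⊓ Im δ = V` means `V ≤ Im δ`, contradicting the assumption
    exact hnle (by rw [← heq]; exact inf_le_right)

end
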